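/- Let x̃ ∈ ℝⁿ with Σᵢ x̃ᵢ = 1 and suppose R x̃ = φ·1 for a scalar φ ≠ 0 (so x̃ = φ·R⁻¹1 for invertible R). Define x̃(μ) = (1/(1−μ))·(x̃ − (μ/n)·1) for μ ∈ [0,1). Then Σᵢ x̃(μ)ᵢ = 1 and R̂(μ)·x̃(μ) is a constant vector, where R̂(μ) = R + (μ/((1-μ)n))·RJ; i.e., x̃(μ) is the interior fixed-point candidate of the incompetent game. -/
import Mathlib


open Matrix BigOperators

/-- If `x̃` sums to one and `R x̃ = φ·1` with `φ ≠ 0` and `R` invertible, then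
`x̃(μ) = (1/(1−μ))(x̃ − (μ/n)·1)` sums to one and `R̂(μ) x̃(μ)` is a constant vector,
where `R̂(μ) = R + (μ/((1-μ)n)) RJ`; i.e. `x̃(μ)` is the interior fixed-point candidate. -/
theorem incompetent_fixed_point_candidate (n : ℕ) (hn : 0 < n)
    (R J : Matrix (Fin n) (Fin n) ℝ) (hJ : J = Matrix.of fun _ _ => (1 : ℝ))
    (hR : IsUnit R)
    (xt : Fin n → ℝ) (hsum : ∑ i, xt i = 1)
    (φ : ℝ) (hφ : φ ≠ 0) (hfix : R.mulVec xt = fun _ => φ)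
    (μ : ℝ) (hμ : μ ∈ Set.Ico (0 : ℝ) 1) :
    (∑ i, (1 / (1 - μ)) * (xt i - μ / n) = 1) ∧
    ∃ c : ℝ, (R + (μ / ((1 - μ) * n)) • (R * J)).mulVec
        (fun i => (1 / (1 - μ)) * (xt i - μ / n)) = fun _ => c := by
  obtain ⟨hμ0, hμ1⟩ := hμ
  have h1μ : (1 - μ) ≠ 0 := by linarith
  have hn0 : (n : ℝ) ≠ 0 := Nat.cast_ne_zero.mpr hn.ne'
  have hsum' : ∑ i, (1 / (1 - μ)) * (xt i - μ / n) = 1 := by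
    rw [← Finset.mul_sum, Finset.sum_sub_distrib, hsum, Finset.sum_const,
      Finset.card_univ, Fintype.card_fin, nsmul_eq_mul]
    field_simp
  refine ⟨hsum', ⟨φ / (1 - μ), ?_⟩⟩
  funext i
  have hfi : ∑ j, R i j * xt j = φ := congrFun hfix i
  simp only [mulVec, dotProduct, Matrix.add_apply, Matrix.smul_apply,
    Matrix.mul_apply, hJ, Matrix.of_apply, mul_one, smul_eq_mul]
  have expand : ∀ j : Fin n, (R i j + μ / ((1 - μ) * n) * ∑ k, R i k) *
      ((1 / (1 - μ)) * (xt j - μ / n)) =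
      (R i j * ((1 / (1 - μ)) * (xt j - μ / n))) +
      (μ / ((1 - μ) * n) * ∑ k, R i k) * ((1 / (1 - μ)) * (xt j - μ / n)) := by
    intro j; ring
  rw [Finset.sum_congr rfl (fun j _ => expand j), Finset.sum_add_distrib,
    ← Finset.mul_sum, hsum', mul_one]
  have : ∑ j, R i j * ((1 / (1 - μ)) * (xt j - μ / n)) =
      (1 / (1 - μ)) * (∑ j, R i j * xt j) - (1 / (1 - μ)) * (μ / n) * ∑ j, R i j := by
    rw [Finset.mul_sum, Finset.mul_sum, ← Finset.sum_sub_distrib]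
    exact Finset.sum_congr rfl (fun j _ => by ring)
  rw [this, hfi]
  field_simp
  ring
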